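/- For fixed s ∈ [0,1], the generating function φ_λ(s) = (μ+σ)/(μ+σ + (1−e^{(s−1)β₁/λ})λ + (1−s)β₀) converges to (μ+σ)/(μ+σ + (1−s)(β₀+β₁)) as λ → ∞. -/

import Mathlib

open Filter Topology

lemma key_lim (c : ℝ) :
    Tendsto (fun lam : ℝ => (1 - Real.exp (c / lam)) * lam) atTop (𝓝 (-c)) := by
  have hderiv : HasDerivAt (fun x : ℝ => Real.exp (c * x)) c 0 := by
    have := (Real.hasDerivAt_exp (c * 0)).comp 0 ((hasDerivAt_id 0).const_mul c)
    simpa [Function.comp_def] using this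
  have hslope : Tendsto (fun x : ℝ => (Real.exp (c * x) - 1) / x) (𝓝[≠] (0:ℝ)) (𝓝 c) := by
    have := hasDerivAt_iff_tendsto_slope.mp hderiv
    refine this.congr fun x => ?_
    simp [slope_fun_def, Real.exp_zero, div_eq_inv_mul]
  have hinv : Tendsto (fun lam : ℝ => 1 / lam) atTop (𝓝[≠] (0:ℝ)) := by
    apply tendsto_nhdsWithin_of_tendsto_nhds_of_eventually_within
    · simpa [one_div] using tendsto_inv_atTop_zero
    · filter_upwards [eventually_gt_atTop (0:ℝ)] with x hx
      simp [Set.mem_compl, one_div, hx.ne']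
  have hcomp : Tendsto (fun lam : ℝ => (Real.exp (c * (1 / lam)) - 1) / (1 / lam)) atTop (𝓝 c) :=
    hslope.comp hinv
  have heq : ∀ᶠ lam : ℝ in atTop,
      (Real.exp (c * (1 / lam)) - 1) / (1 / lam) = (Real.exp (c / lam) - 1) * lam := by
    filter_upwards [eventually_gt_atTop (0:ℝ)] with x hx
    field_simp
  have : Tendsto (fun lam : ℝ => (Real.exp (c / lam) - 1) * lam) atTop (𝓝 c) :=
    hcomp.congr' heq
  have h2 := this.neg
  refine h2.congr fun x => ?_
  ring

theorem pgf_limit_lambda_infty (μ σ β₀ β₁ : ℝ)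
    (hμσ : 0 < μ + σ) (hβ₀ : 0 ≤ β₀) (hβ₁ : 0 ≤ β₁)
    (s : ℝ) (hs : s ∈ Set.Icc (0 : ℝ) 1) :
    Tendsto (fun lam : ℝ =>
        (μ + σ) /
          (μ + σ + (1 - Real.exp ((s - 1) * β₁ / lam)) * lam + (1 - s) * β₀))
      atTop (𝓝 ((μ + σ) / (μ + σ + (1 - s) * (β₀ + β₁)))) := by
  obtain ⟨hs0, hs1⟩ := hs
  have hkey := key_lim ((s - 1) * β₁)
  have hden : Tendsto (fun lam : ℝ =>
      μ + σ + (1 - Real.exp ((s - 1) * β₁ / lam)) * lam + (1 - s) * β₀) atTop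
      (𝓝 (μ + σ + (1 - s) * (β₀ + β₁))) := by
    have h := ((tendsto_const_nhds (x := μ + σ)).add hkey).add (tendsto_const_nhds (x := (1 - s) * β₀))
    convert h using 2
    ring
  have hpos : 0 < μ + σ + (1 - s) * (β₀ + β₁) := by
    have : 0 ≤ (1 - s) * (β₀ + β₁) := mul_nonneg (by linarith) (by linarith)
    linarith
  exact tendsto_const_nhds.div hden hpos.ne'
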